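/- Let g ≥ 2 and r ≥ 1 be integers. In the field ℚ(q, t) of rational functions in two variables over ℚ, set Ω_r = ∏_{k=2}^{r} (1 + q^k t^{k−1})^{2g} / ((1 − q^k t^{k−2})(1 − q^k t^k)) (the empty product for r = 1 being 1). Let ι be the ℚ-algebra automorphism of ℚ(q, t) determined by ι(q) = q⁻¹ and ι(t) = t⁻¹. Then q^{(r+2)(r−1)(g−1)} · t^{r(r−1)(g−1)} · ι(Ω_r) = Ω_r. -/

import Mathlib

/-!
Statement 5: the symmetry of the refined Poincaré series `Ω(𝔑_{r,d}, q, t)` of the full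
fixed-determinant moduli stack (Section 1.3 of the paper), stated as a rational-function
identity in the field `ℚ(q, t) = FractionRing (MvPolynomial (Fin 2) ℚ)`, with `q = X 0`,
`t = X 1`.
-/

noncomputable section

/-- The field `ℚ(q, t)` of rational functions in two variables. -/
abbrev RatFuncQT : Type := FractionRing (MvPolynomial (Fin 2) ℚ)

/-- The variable `q ∈ ℚ(q, t)`. -/
def qq : RatFuncQT := algebraMap (MvPolynomial (Fin 2) ℚ) RatFuncQT (MvPolynomial.X 0)

/-- The variable `t ∈ ℚ(q, t)`. -/
def tt : RatFuncQT := algebraMap (MvPolynomial (Fin 2) ℚ) RatFuncQT (MvPolynomial.X 1)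

/-- The refined Poincaré series
`Ω_r = ∏_{k=2}^r (1 + q^k t^{k−1})^{2g} / ((1 − q^k t^{k−2})(1 − q^k t^k))`. -/
def OmegaStack (g r : ℕ) : RatFuncQT :=
  ∏ k ∈ Finset.Icc 2 r,
    (1 + qq ^ k * tt ^ (k - 1)) ^ (2 * g) /
      ((1 - qq ^ k * tt ^ (k - 2)) * (1 - qq ^ k * tt ^ k))


lemma qq_ne : qq ≠ 0 := by
  simp only [qq, ne_eq,
    map_eq_zero_iff _ (IsFractionRing.injective (MvPolynomial (Fin 2) ℚ) RatFuncQT)]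
  exact MvPolynomial.X_ne_zero 0

lemma tt_ne : tt ≠ 0 := by
  simp only [tt, ne_eq,
    map_eq_zero_iff _ (IsFractionRing.injective (MvPolynomial (Fin 2) ℚ) RatFuncQT)]
  exact MvPolynomial.X_ne_zero 1

lemma one_sub_ne (m n : ℕ) (hm : 1 ≤ m) : (1 : RatFuncQT) - qq ^ m * tt ^ n ≠ 0 := by
  have : (1 : RatFuncQT) - qq ^ m * tt ^ n
      = algebraMap (MvPolynomial (Fin 2) ℚ) RatFuncQT
        (1 - MvPolynomial.X 0 ^ m * MvPolynomial.X 1 ^ n) := by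
    simp [qq, tt, map_sub, map_mul, map_pow]
  rw [this, ne_eq, map_eq_zero_iff _ (IsFractionRing.injective (MvPolynomial (Fin 2) ℚ) RatFuncQT)]
  intro h
  have := congrArg (MvPolynomial.eval (0 : Fin 2 → ℚ)) h
  simp [zero_pow (by omega : m ≠ 0)] at this

lemma one_add_ne (m n : ℕ) (hm : 1 ≤ m) : (1 : RatFuncQT) + qq ^ m * tt ^ n ≠ 0 := by
  have : (1 : RatFuncQT) + qq ^ m * tt ^ n
      = algebraMap (MvPolynomial (Fin 2) ℚ) RatFuncQT
        (1 + MvPolynomial.X 0 ^ m * MvPolynomial.X 1 ^ n) := by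
    simp [qq, tt, map_add, map_mul, map_pow]
  rw [this, ne_eq, map_eq_zero_iff _ (IsFractionRing.injective (MvPolynomial (Fin 2) ℚ) RatFuncQT)]
  intro h
  have := congrArg (MvPolynomial.eval (0 : Fin 2 → ℚ)) h
  simp [zero_pow (by omega : m ≠ 0)] at this

set_option maxHeartbeats 1000000 in
lemma factor_symm (g : ℕ) (hg : 1 ≤ g) (k : ℕ) (hk : 2 ≤ k)
    (ι : RatFuncQT ≃ₐ[ℚ] RatFuncQT) (hq : ι qq = qq⁻¹) (ht : ι tt = tt⁻¹) :
    (qq ^ (2 * k) * tt ^ (2 * (k - 1))) ^ (g - 1) *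
      ι ((1 + qq ^ k * tt ^ (k - 1)) ^ (2 * g) /
        ((1 - qq ^ k * tt ^ (k - 2)) * (1 - qq ^ k * tt ^ k))) =
    (1 + qq ^ k * tt ^ (k - 1)) ^ (2 * g) /
        ((1 - qq ^ k * tt ^ (k - 2)) * (1 - qq ^ k * tt ^ k)) := by
  obtain ⟨m, rfl⟩ : ∃ m, k = m + 2 := ⟨k - 2, by omega⟩
  obtain ⟨u, rfl⟩ : ∃ u, g = u + 1 := ⟨g - 1, by omega⟩
  have hqm : ∀ n : ℕ, qq ^ n ≠ (0:RatFuncQT) := fun n => pow_ne_zero _ qq_ne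
  have htm : ∀ n : ℕ, tt ^ n ≠ (0:RatFuncQT) := fun n => pow_ne_zero _ tt_ne
  have hA := one_add_ne (m+2) (m+1) (by omega)
  have hB := one_sub_ne (m+2) m (by omega)
  have hC := one_sub_ne (m+2) (m+2) (by omega)
  simp only [map_div₀, map_pow, map_mul, map_add, map_sub, map_one, hq, ht,
    Nat.add_sub_cancel, show m + 2 - 1 = m + 1 from rfl]
  have h0q : qq ≠ 0 := qq_ne
  have h0t : tt ≠ 0 := tt_ne
  have hw : (qq ^ (m+2) * tt ^ (m+1)) ≠ 0 := mul_ne_zero (hqm _) (htm _)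
  have hwB : (qq ^ (m+2) * tt ^ m) ≠ 0 := mul_ne_zero (hqm _) (htm _)
  have hwC : (qq ^ (m+2) * tt ^ (m+2)) ≠ 0 := mul_ne_zero (hqm _) (htm _)
  have hA' : (1:RatFuncQT) + qq⁻¹ ^ (m+2) * tt⁻¹ ^ (m+1)
      = (qq ^ (m+2) * tt ^ (m+1))⁻¹ * (1 + qq ^ (m+2) * tt ^ (m+1)) := by
    rw [inv_pow, inv_pow, ← mul_inv, mul_add, mul_one, inv_mul_cancel₀ hw, add_comm]
  have hB' : (1:RatFuncQT) - qq⁻¹ ^ (m+2) * tt⁻¹ ^ m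
      = -((qq ^ (m+2) * tt ^ m)⁻¹ * (1 - qq ^ (m+2) * tt ^ m)) := by
    rw [inv_pow, inv_pow, ← mul_inv, mul_sub, mul_one, inv_mul_cancel₀ hwB, neg_sub]
  have hC' : (1:RatFuncQT) - qq⁻¹ ^ (m+2) * tt⁻¹ ^ (m+2)
      = -((qq ^ (m+2) * tt ^ (m+2))⁻¹ * (1 - qq ^ (m+2) * tt ^ (m+2))) := by
    rw [inv_pow, inv_pow, ← mul_inv, mul_sub, mul_one, inv_mul_cancel₀ hwC, neg_sub]
  rw [hA', hB', hC', neg_mul_neg, mul_pow (qq ^ (m + 2) * tt ^ (m + 1))⁻¹, inv_pow]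
  field_simp
  ring

lemma prod_mono_eq (r : ℕ) :
    ∏ k ∈ Finset.Icc 2 r, (qq ^ (2 * k) * tt ^ (2 * (k - 1)))
      = qq ^ ((r + 2) * (r - 1)) * tt ^ (r * (r - 1)) := by
  induction r with
  | zero => simp
  | succ n ih =>
    rcases Nat.eq_zero_or_pos n with rfl | hn
    · simp
    rw [Finset.prod_Icc_succ_top (by omega), ih]
    rw [show (n + 1 + 2) * (n + 1 - 1) = (n + 2) * (n - 1) + 2 * (n + 1) from by
        cases n with | zero => omega | succ p => simp only [Nat.add_sub_cancel]; ring,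
      show (n + 1) * (n + 1 - 1) = n * (n - 1) + 2 * (n + 1 - 1) from by
        cases n with | zero => omega | succ p => simp only [Nat.add_sub_cancel]; ring,
      pow_add, pow_add]
    ring

/-- for `g ≥ 2`, `r ≥ 1` and the `ℚ`-algebra automorphism `ι` of `ℚ(q,t)` with
`ι(q) = q⁻¹`, `ι(t) = t⁻¹`, one has
`q^{(r+2)(r−1)(g−1)} t^{r(r−1)(g−1)} ι(Ω_r) = Ω_r`. -/
theorem stmt5 (g r : ℕ) (hg : 2 ≤ g) (hr : 1 ≤ r)
    (ι : RatFuncQT ≃ₐ[ℚ] RatFuncQT) (hq : ι qq = qq⁻¹) (ht : ι tt = tt⁻¹) :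
    qq ^ ((r + 2) * (r - 1) * (g - 1)) * tt ^ (r * (r - 1) * (g - 1)) * ι (OmegaStack g r) =
      OmegaStack g r := by
  have key : qq ^ ((r + 2) * (r - 1) * (g - 1)) * tt ^ (r * (r - 1) * (g - 1))
      = ∏ k ∈ Finset.Icc 2 r, (qq ^ (2 * k) * tt ^ (2 * (k - 1))) ^ (g - 1) := by
    rw [Finset.prod_pow, prod_mono_eq, mul_pow, ← pow_mul, ← pow_mul]
  rw [key, OmegaStack, map_prod, ← Finset.prod_mul_distrib]
  refine Finset.prod_congr rfl fun k hk => ?_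
  exact factor_symm g (by omega) k (Finset.mem_Icc.mp hk).1 ι hq ht

end
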